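/- Let u : ℝ² → ℝ be twice continuously differentiable, suppose the gradient satisfies |∇u(x)| = o(|x|^{−1}) as |x| → ∞, and suppose Δu = ∂²u/∂x₁² + ∂²u/∂x₂² is Lebesgue integrable on ℝ². Then ∫_{ℝ²} Δu dx = 0. -/

import Mathlib

open Real Filter Asymptotics MeasureTheory Topology

noncomputable section

/-- Partial derivative of a scalar function on ℝ² in the i-th coordinate direction. -/
def pd2 (i : Fin 2) (g : EuclideanSpace ℝ (Fin 2) → ℝ) (x : EuclideanSpace ℝ (Fin 2)) : ℝ :=
  fderiv ℝ g x (EuclideanSpace.single i 1)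

abbrev E2 := EuclideanSpace ℝ (Fin 2)
abbrev P2 := Fin 2 → ℝ

def eq2 : E2 ≃L[ℝ] P2 := EuclideanSpace.equiv (Fin 2) ℝ

lemma pd2_contDiff {u : E2 → ℝ} (hu : ContDiff ℝ 2 u) (i : Fin 2) :
    ContDiff ℝ 1 (pd2 i u) := by
  have h1 : ContDiff ℝ 1 (fun x => fderiv ℝ u x) := hu.fderiv_right (by norm_num)
  exact h1.clm_apply contDiff_const

lemma pd2_hasFDerivAt {u : E2 → ℝ} (hu : ContDiff ℝ 2 u) (i : Fin 2) (y : P2) :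
    HasFDerivAt (fun z : P2 => pd2 i u (eq2.symm z))
      ((fderiv ℝ (pd2 i u) (eq2.symm y)).comp (eq2.symm : P2 →L[ℝ] E2)) y := by
  have h1 : DifferentiableAt ℝ (pd2 i u) (eq2.symm y) :=
    ((pd2_contDiff hu i).differentiable one_ne_zero).differentiableAt
  exact h1.hasFDerivAt.comp y (eq2.symm.hasFDerivAt)

lemma single_eq (i : Fin 2) : eq2.symm (Pi.single i 1) = EuclideanSpace.single i 1 := rfl

lemma pd2_apply (g : E2 → ℝ) (i j : Fin 2) (x : E2) :
    fderiv ℝ g x (EuclideanSpace.single j 1) = pd2 j g x := rfl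


def Dd (u : E2 → ℝ) : P2 → ℝ := fun y => pd2 0 (pd2 0 u) (eq2.symm y) + pd2 1 (pd2 1 u) (eq2.symm y)

lemma div_eq (u : E2 → ℝ) (y : P2) :
    (∑ i : Fin 2, ((fderiv ℝ (pd2 i u) (eq2.symm y)).comp (eq2.symm : P2 →L[ℝ] E2)) (Pi.single i 1))
      = Dd u y := by
  rw [Fin.sum_univ_two]; rfl

lemma box_identity {u : E2 → ℝ} (hu : ContDiff ℝ 2 u) (R : ℝ) (hR : 0 < R)
    (Hi : IntegrableOn (Dd u) (Set.Icc (fun _ => -R) (fun _ => R) : Set P2)) :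
    ∫ y in Set.Icc (fun _ => -R : P2) (fun _ => R), Dd u y =
      ∑ i : Fin 2,
        ((∫ x in Set.Icc ((fun _ => -R : P2) ∘ i.succAbove) ((fun _ => R : P2) ∘ i.succAbove),
            pd2 i u (eq2.symm (i.insertNth R x))) -
          ∫ x in Set.Icc ((fun _ => -R : P2) ∘ i.succAbove) ((fun _ => R : P2) ∘ i.succAbove),
            pd2 i u (eq2.symm (i.insertNth (-R) x))) := by
  have hle : (fun _ => -R : P2) ≤ fun _ => R := fun i => by dsimp; linarith
  have key := MeasureTheory.integral_divergence_of_hasFDerivAt_off_countable'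
    (n := 1) (fun _ => -R) (fun _ => R) hle
    (fun i y => pd2 i u (eq2.symm y))
    (fun i y => (fderiv ℝ (pd2 i u) (eq2.symm y)).comp (eq2.symm : P2 →L[ℝ] E2))
    ∅ Set.countable_empty
    (fun i => (((pd2_contDiff hu i).continuous).comp eq2.symm.continuous).continuousOn)
    (fun x _ i => pd2_hasFDerivAt hu i x) ?_
  · rw [← key]
    refine setIntegral_congr_fun measurableSet_Icc fun y _ => ?_
    exact (div_eq u y).symm
  · exact Hi.congr_fun (fun y _ => (div_eq u y).symm) measurableSet_Icc

lemma abs_coord_le (y : E2) (i : Fin 2) : |y i| ≤ ‖y‖ := by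
  rw [EuclideanSpace.norm_eq]
  have h : |y i| ^ 2 ≤ ∑ j, ‖y j‖ ^ 2 := by
    rw [sq_abs]
    calc y i ^ 2 = ‖y i‖ ^ 2 := by rw [Real.norm_eq_abs, sq_abs]
    _ ≤ ∑ j, ‖y j‖ ^ 2 := Finset.single_le_sum (f := fun j => ‖y j‖ ^ 2)
        (fun j _ => sq_nonneg _) (Finset.mem_univ i)
  have := Real.sqrt_le_sqrt h
  rwa [Real.sqrt_sq_eq_abs, abs_abs] at this

lemma face_bound {u : E2 → ℝ} (hu : ContDiff ℝ 2 u) {ε R : ℝ} (hR : 0 < R) (hε : 0 ≤ ε)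
    (hb : ∀ x : E2, R ≤ ‖x‖ → ‖fderiv ℝ u x‖ ≤ ε * ‖x‖⁻¹)
    (i : Fin 2) (c : ℝ) (hc : |c| = R) :
    ‖∫ x in Set.Icc ((fun _ => -R : P2) ∘ i.succAbove) ((fun _ => R : P2) ∘ i.succAbove),
        pd2 i u (eq2.symm (i.insertNth c x))‖ ≤ 2 * ε := by
  have hle : ((fun _ => -R : P2) ∘ i.succAbove) ≤ ((fun _ => R : P2) ∘ i.succAbove) :=
    fun j => by dsimp; linarith
  have hvol : volume (Set.Icc ((fun _ => -R : P2) ∘ i.succAbove)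
      ((fun _ => R : P2) ∘ i.succAbove)) < ⊤ := by
    rw [Real.volume_Icc_pi]
    exact ENNReal.prod_lt_top (fun j _ => ENNReal.ofReal_lt_top)
  have hvolR : (volume (Set.Icc ((fun _ => -R : P2) ∘ i.succAbove)
      ((fun _ => R : P2) ∘ i.succAbove))).toReal = 2 * R := by
    rw [Real.volume_Icc_pi_toReal hle]
    simp [Fin.prod_univ_one]; ring
  have hpt : ∀ x ∈ Set.Icc ((fun _ => -R : P2) ∘ i.succAbove)
      ((fun _ => R : P2) ∘ i.succAbove),
      ‖pd2 i u (eq2.symm (i.insertNth c x))‖ ≤ ε / R := by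
    intro x _
    set y : E2 := eq2.symm (i.insertNth c x) with hy
    have hyi : |y i| = R := by
      have : y i = c := Fin.insertNth_apply_same (α := fun _ => ℝ) i c x
      rw [this, hc]
    have hny : R ≤ ‖y‖ := hyi ▸ abs_coord_le y i
    have hR' : 0 < ‖y‖ := lt_of_lt_of_le hR hny
    have h1 : ‖fderiv ℝ u y‖ ≤ ε * ‖y‖⁻¹ := hb y hny
    have h2 : ‖y‖⁻¹ ≤ R⁻¹ := by
      apply inv_anti₀ hR hny
    have h3 : ‖pd2 i u y‖ ≤ ‖fderiv ℝ u y‖ := by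
      have := (fderiv ℝ u y).le_opNorm (EuclideanSpace.single i 1)
      rwa [EuclideanSpace.norm_single, norm_one, mul_one] at this
    calc ‖pd2 i u y‖ ≤ ε * ‖y‖⁻¹ := h3.trans h1
    _ ≤ ε * R⁻¹ := by exact mul_le_mul_of_nonneg_left h2 hε
    _ = ε / R := by rw [div_eq_mul_inv]
  have hcont : Continuous fun x : Fin 1 → ℝ => pd2 i u (eq2.symm (i.insertNth c x)) :=
    (pd2_contDiff hu i).continuous.comp
      (eq2.symm.continuous.comp (continuous_const.finInsertNth i continuous_id))
  have := norm_setIntegral_le_of_norm_le_const hvol hpt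
  rw [measureReal_def, hvolR] at this
  calc ‖_‖ ≤ ε / R * (2 * R) := this
  _ = 2 * ε := by field_simp

lemma flux_small {u : E2 → ℝ} (hu : ContDiff ℝ 2 u) {ε R : ℝ} (hR : 0 < R) (hε : 0 ≤ ε)
    (hb : ∀ x : E2, R ≤ ‖x‖ → ‖fderiv ℝ u x‖ ≤ ε * ‖x‖⁻¹) :
    ‖∑ i : Fin 2,
        ((∫ x in Set.Icc ((fun _ => -R : P2) ∘ i.succAbove) ((fun _ => R : P2) ∘ i.succAbove),
            pd2 i u (eq2.symm (i.insertNth R x))) -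
          ∫ x in Set.Icc ((fun _ => -R : P2) ∘ i.succAbove) ((fun _ => R : P2) ∘ i.succAbove),
            pd2 i u (eq2.symm (i.insertNth (-R) x)))‖ ≤ 8 * ε := by
  have hterm : ∀ i : Fin 2,
      ‖(∫ x in Set.Icc ((fun _ => -R : P2) ∘ i.succAbove) ((fun _ => R : P2) ∘ i.succAbove),
            pd2 i u (eq2.symm (i.insertNth R x))) -
          ∫ x in Set.Icc ((fun _ => -R : P2) ∘ i.succAbove) ((fun _ => R : P2) ∘ i.succAbove),
            pd2 i u (eq2.symm (i.insertNth (-R) x))‖ ≤ 4 * ε := by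
    intro i
    have h1 := face_bound hu hR hε hb i R (abs_of_pos hR)
    have h2 := face_bound hu hR hε hb i (-R) (by rw [abs_neg, abs_of_pos hR])
    calc ‖_ - _‖ ≤ _ + _ := norm_sub_le _ _
    _ ≤ 2 * ε + 2 * ε := add_le_add h1 h2
    _ = 4 * ε := by ring
  calc ‖∑ i : Fin 2, _‖ ≤ ∑ i : Fin 2, _ := norm_sum_le _ _
  _ ≤ ∑ _i : Fin 2, 4 * ε := Finset.sum_le_sum (fun i _ => hterm i)
  _ = 8 * ε := by simp [Finset.sum_const]; ring

theorem stmt7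
    (u : EuclideanSpace ℝ (Fin 2) → ℝ)
    (hu : ContDiff ℝ 2 u)
    (hgrad : (fun x => ‖fderiv ℝ u x‖)
      =o[cocompact (EuclideanSpace ℝ (Fin 2))] fun x => ‖x‖⁻¹)
    (hint : Integrable (fun x => pd2 0 (pd2 0 u) x + pd2 1 (pd2 1 u) x)) :
    ∫ x, (pd2 0 (pd2 0 u) x + pd2 1 (pd2 1 u) x) = 0 := by
  -- transfer integrability to the pi space
  have hmp := (EuclideanSpace.volume_preserving_symm_measurableEquiv_toLp (Fin 2)).symm
  have hDint : Integrable (Dd u) := by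
    have := (hmp.integrable_comp_emb
      (MeasurableEquiv.toLp 2 (Fin 2 → ℝ)).measurableEmbedding).mpr hint
    exact this
  have hIeq : (∫ x, (pd2 0 (pd2 0 u) x + pd2 1 (pd2 1 u) x)) = ∫ y, Dd u y := by
    have := hmp.integral_comp (MeasurableEquiv.toLp 2 (Fin 2 → ℝ)).measurableEmbedding
      (fun x => pd2 0 (pd2 0 u) x + pd2 1 (pd2 1 u) x)
    exact this.symm
  rw [hIeq]
  -- exhausting boxes
  set S : ℕ → Set P2 := fun n => Set.Icc (fun _ => -(n + 1 : ℝ)) (fun _ => (n + 1 : ℝ)) with hS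
  have hSm : ∀ n, MeasurableSet (S n) := fun n => measurableSet_Icc
  have hmono : Monotone S := by
    intro n m hnm
    apply Set.Icc_subset_Icc
    · intro j; dsimp; have : (n : ℝ) ≤ m := Nat.cast_le.mpr hnm; linarith
    · intro j; dsimp; have : (n : ℝ) ≤ m := Nat.cast_le.mpr hnm; linarith
  have hunion : (⋃ n, S n) = Set.univ := by
    ext y
    simp only [Set.mem_iUnion, Set.mem_univ, iff_true]
    obtain ⟨n, hn⟩ := exists_nat_ge ‖y‖
    refine ⟨n, ?_, ?_⟩ <;> intro j <;>
      have hj : |y j| ≤ ‖y‖ := by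
        have := norm_le_pi_norm y j
        rwa [Real.norm_eq_abs] at this
    · dsimp; have := abs_le.mp hj; linarith
    · dsimp; have := abs_le.mp hj; linarith
  have htend : Tendsto (fun n => ∫ y in S n, Dd u y) atTop (𝓝 (∫ y, Dd u y)) := by
    have := tendsto_setIntegral_of_monotone hSm hmono hDint.integrableOn
    rwa [hunion, setIntegral_univ] at this
  have htend0 : Tendsto (fun n => ∫ y in S n, Dd u y) atTop (𝓝 0) := by
    rw [NormedAddCommGroup.tendsto_nhds_zero]
    intro ε hε
    set ε' : ℝ := ε / 9 with hε'
    have hε'pos : 0 < ε' := by positivity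
    have hev := hgrad.def hε'pos
    rw [← Metric.cobounded_eq_cocompact,
      (Metric.hasBasis_cobounded_compl_closedBall (0 : E2)).eventually_iff] at hev
    obtain ⟨r, -, hr⟩ := hev
    obtain ⟨N, hN⟩ := exists_nat_ge r
    filter_upwards [eventually_ge_atTop N] with n hn
    have hR : (0 : ℝ) < (n + 1 : ℝ) := by positivity
    have hb : ∀ x : E2, (n + 1 : ℝ) ≤ ‖x‖ → ‖fderiv ℝ u x‖ ≤ ε' * ‖x‖⁻¹ := by
      intro x hx
      have hxr : r < ‖x‖ := by
        have h1 : (N : ℝ) ≤ n := Nat.cast_le.mpr hn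
        have : r < (n + 1 : ℝ) := by linarith
        linarith
      have hmem : x ∈ (Metric.closedBall (0 : E2) r)ᶜ := by
        simp only [Set.mem_compl_iff, Metric.mem_closedBall, dist_zero_right, not_le]
        exact hxr
      have := hr hmem
      simpa [Real.norm_eq_abs, abs_of_nonneg (norm_nonneg _),
        abs_of_nonneg (inv_nonneg.mpr (norm_nonneg x))] using this
    have hiden := box_identity hu (n + 1 : ℝ) hR hDint.integrableOn
    have hflux := flux_small hu hR hε'pos.le hb
    rw [← hiden] at hflux
    calc ‖∫ y in S n, Dd u y‖ ≤ 8 * ε' := hflux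
    _ < ε := by rw [hε']; linarith
  exact tendsto_nhds_unique htend htend0

end
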